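/- Let T be a quantum channel on L(ℂ^d) and ρ a density operator on ℂ^d ⊗ ℂ^d. Then ‖(Θ ⊗ id)((id − T) ⊗ id)(ρ)‖₁ ≤ (d/√2) ‖((id − T) ⊗ id)(ρ)‖₁, where Θ is transposition on the first factor. -/

import Mathlib

open Matrix Kronecker BigOperators
open scoped ComplexOrder

/-- The former `Matrix.PosSemidef.sqrt` (removed from Mathlib), with its old definition. -/
noncomputable def posSemidefSqrt {n : Type*} [Fintype n] [DecidableEq n] {A : Matrix n n ℂ}
    (hA : A.PosSemidef) : Matrix n n ℂ :=
  hA.1.eigenvectorUnitary.1 * diagonal ((↑) ∘ (√·) ∘ hA.1.eigenvalues) *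
    (star hA.1.eigenvectorUnitary : Matrix n n ℂ)

noncomputable def traceNorm {n : Type*} [Fintype n] [DecidableEq n] (X : Matrix n n ℂ) : ℝ :=
  ((posSemidefSqrt (Matrix.posSemidef_conjTranspose_mul_self X)).trace).re


noncomputable def hsNorm {n : Type*} [Fintype n] (X : Matrix n n ℂ) : ℝ :=
  Real.sqrt ((Xᴴ * X).trace.re)

noncomputable def singularValues {n : Type*} [Fintype n] [DecidableEq n] (Y : Matrix n n ℂ) :
    n → ℝ :=
  fun i => Real.sqrt ((Matrix.posSemidef_conjTranspose_mul_self Y).1.eigenvalues i)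

/-- Partial transpose on the first tensor factor. -/
def ptransp {d k : ℕ} (X : Matrix (Fin d × Fin k) (Fin d × Fin k) ℂ) :
    Matrix (Fin d × Fin k) (Fin d × Fin k) ℂ :=
  fun p q => X (q.1, p.2) (p.1, q.2)

/-- Partial trace over the first tensor factor. -/
noncomputable def ptraceH {d k : ℕ} (X : Matrix (Fin d × Fin k) (Fin d × Fin k) ℂ) :
    Matrix (Fin k) (Fin k) ℂ :=
  fun j j' => ∑ i, X (i, j) (i, j')

def vec {d : ℕ} (A : Matrix (Fin d) (Fin d) ℂ) : Fin d × Fin d → ℂ := fun p => A p.1 p.2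

/-- Outer product |v⟩⟨w|. -/
def outer {n : Type*} (v w : n → ℂ) : Matrix n n ℂ := fun i j => v i * star (w j)

/-- The swap operator F(e_i ⊗ e_j) = e_j ⊗ e_i. -/
def swapOp (d : ℕ) : Matrix (Fin d × Fin d) (Fin d × Fin d) ℂ :=
  fun p q => if p.1 = q.2 ∧ p.2 = q.1 then 1 else 0

/-- Blockwise action of Φ ⊗ id on operators on H ⊗ K. -/
def tensorExt {d k : ℕ} (Φ : Matrix (Fin d) (Fin d) ℂ → Matrix (Fin d) (Fin d) ℂ)
    (Z : Matrix (Fin d × Fin k) (Fin d × Fin k) ℂ) :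
    Matrix (Fin d × Fin k) (Fin d × Fin k) ℂ :=
  fun p q => Φ (fun a b => Z (a, p.2) (b, q.2)) p.1 q.1

/-- Diamond norm (stabilized at ancilla dimension d). -/
noncomputable def diamondNorm {d : ℕ}
    (Φ : Matrix (Fin d) (Fin d) ℂ → Matrix (Fin d) (Fin d) ℂ) : ℝ :=
  ⨆ ρ : {ρ : Matrix (Fin d × Fin d) (Fin d × Fin d) ℂ // ρ.PosSemidef ∧ ρ.trace = 1},
    traceNorm (tensorExt Φ ρ.1)

/-! ### Auxiliary lemmas -/

section Aux
variable {n : Type*} [Fintype n] [DecidableEq n]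

lemma myTrace_unitary_conj (U : Matrix.unitaryGroup n ℂ) (D : Matrix n n ℂ) :
    ((U : Matrix n n ℂ) * D * (star U : Matrix n n ℂ)).trace = D.trace := by
  rw [Matrix.trace_mul_cycle, Matrix.UnitaryGroup.star_mul_self, one_mul]

lemma myTrace_eq_sum_eigenvalues {A : Matrix n n ℂ} (hA : A.IsHermitian) :
    A.trace = ∑ i, (hA.eigenvalues i : ℂ) := by
  conv_lhs => rw [hA.spectral_theorem, Unitary.conjStarAlgAut_apply]
  rw [myTrace_unitary_conj, Matrix.trace_diagonal]
  rfl

lemma mySqrt_trace {A : Matrix n n ℂ} (hA : A.PosSemidef) :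
    (posSemidefSqrt hA).trace = ∑ i, (Real.sqrt (hA.1.eigenvalues i) : ℂ) := by
  rw [posSemidefSqrt, myTrace_unitary_conj, Matrix.trace_diagonal]
  rfl

lemma myTraceNorm_eq (X : Matrix n n ℂ) :
    traceNorm X = ∑ i, Real.sqrt ((Matrix.posSemidef_conjTranspose_mul_self X).1.eigenvalues i) := by
  rw [traceNorm, mySqrt_trace]
  simp

lemma myHsNorm_sq (X : Matrix n n ℂ) :
    (Xᴴ * X).trace.re = ∑ i, (Matrix.posSemidef_conjTranspose_mul_self X).1.eigenvalues i := by
  rw [myTrace_eq_sum_eigenvalues (Matrix.posSemidef_conjTranspose_mul_self X).1]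
  simp

lemma myTraceNorm_le_card (X : Matrix n n ℂ) :
    traceNorm X ≤ Real.sqrt (Fintype.card n) * hsNorm X := by
  rw [myTraceNorm_eq, hsNorm, myHsNorm_sq]
  have h1 : (∑ i, Real.sqrt ((Matrix.posSemidef_conjTranspose_mul_self X).1.eigenvalues i)) ^ 2
      ≤ (Fintype.card n) * ∑ i, (Matrix.posSemidef_conjTranspose_mul_self X).1.eigenvalues i := by
    calc (∑ i, Real.sqrt ((Matrix.posSemidef_conjTranspose_mul_self X).1.eigenvalues i)) ^ 2
        ≤ (Finset.univ.card : ℝ) * ∑ i, Real.sqrt ((Matrix.posSemidef_conjTranspose_mul_self X).1.eigenvalues i) ^ 2 :=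
          sq_sum_le_card_mul_sum_sq
      _ = (Fintype.card n) * ∑ i, (Matrix.posSemidef_conjTranspose_mul_self X).1.eigenvalues i := by
          rw [Finset.card_univ]
          congr 1
          exact Finset.sum_congr rfl fun i _ =>
            Real.sq_sqrt ((Matrix.posSemidef_conjTranspose_mul_self X).eigenvalues_nonneg i)
  have h2 : 0 ≤ ∑ i, Real.sqrt ((Matrix.posSemidef_conjTranspose_mul_self X).1.eigenvalues i) :=
    Finset.sum_nonneg fun i _ => Real.sqrt_nonneg _
  calc ∑ i, Real.sqrt ((Matrix.posSemidef_conjTranspose_mul_self X).1.eigenvalues i)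
      = Real.sqrt ((∑ i, Real.sqrt ((Matrix.posSemidef_conjTranspose_mul_self X).1.eigenvalues i)) ^ 2) :=
        (Real.sqrt_sq h2).symm
    _ ≤ Real.sqrt ((Fintype.card n) * ∑ i, (Matrix.posSemidef_conjTranspose_mul_self X).1.eigenvalues i) :=
        Real.sqrt_le_sqrt h1
    _ = Real.sqrt (Fintype.card n) * Real.sqrt (∑ i, (Matrix.posSemidef_conjTranspose_mul_self X).1.eigenvalues i) :=
        Real.sqrt_mul (by positivity) _

lemma myUnitary_conj_mul (U : Matrix.unitaryGroup n ℂ) (D1 D2 : Matrix n n ℂ) :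
    ((U : Matrix n n ℂ) * D1 * (star U : Matrix n n ℂ)) *
      ((U : Matrix n n ℂ) * D2 * (star U : Matrix n n ℂ))
      = (U : Matrix n n ℂ) * (D1 * D2) * (star U : Matrix n n ℂ) := by
  have h := Matrix.UnitaryGroup.star_mul_self U
  simp only [Matrix.mul_assoc]
  rw [← Matrix.mul_assoc (star (U : Matrix n n ℂ)) (U : Matrix n n ℂ), h, one_mul]

lemma myHerm_conj_mul {A : Matrix n n ℂ} (hA : A.IsHermitian) :
    Aᴴ * A = (hA.eigenvectorUnitary : Matrix n n ℂ) *
      Matrix.diagonal (fun i => ((hA.eigenvalues i : ℂ)) ^ 2) *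
      (star hA.eigenvectorUnitary : Matrix n n ℂ) := by
  rw [hA.eq]
  conv_lhs => rw [hA.spectral_theorem, Unitary.conjStarAlgAut_apply]
  rw [myUnitary_conj_mul, Matrix.diagonal_mul_diagonal]
  congr 1
  ext i
  simp [pow_two]

lemma myTraceNorm_hermitian {A : Matrix n n ℂ} (hA : A.IsHermitian) :
    traceNorm A = ∑ i, |hA.eigenvalues i| := by
  have hPSD := Matrix.posSemidef_conjTranspose_mul_self A
  set S : Matrix n n ℂ := (hA.eigenvectorUnitary : Matrix n n ℂ) *
      Matrix.diagonal (fun i => ((|hA.eigenvalues i| : ℝ) : ℂ)) *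
      (star hA.eigenvectorUnitary : Matrix n n ℂ) with hSdef
  have hS : S.PosSemidef := by
    rw [hSdef, show (star hA.eigenvectorUnitary : Matrix n n ℂ)
        = (hA.eigenvectorUnitary : Matrix n n ℂ)ᴴ from rfl]
    exact (Matrix.posSemidef_diagonal_iff.mpr fun i =>
      Complex.zero_le_real.mpr (abs_nonneg _)).mul_mul_conjTranspose_same _
  have hSsq : S ^ 2 = Aᴴ * A := by
    rw [myHerm_conj_mul hA, pow_two, hSdef, myUnitary_conj_mul, Matrix.diagonal_mul_diagonal]
    have he : (fun i => ((|hA.eigenvalues i| : ℝ) : ℂ) * ((|hA.eigenvalues i| : ℝ) : ℂ))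
        = (fun i => ((hA.eigenvalues i : ℂ)) ^ 2) := by
      funext i
      rw [← Complex.ofReal_mul, ← Complex.ofReal_pow, Complex.ofReal_inj, ← sq_abs, sq]
    rw [he]
  have hsqrt : posSemidefSqrt hPSD = S := by
    open scoped MatrixOrder in
    have e1 : posSemidefSqrt hPSD = cfc Real.sqrt (Aᴴ * A) := by
      rw [hPSD.1.cfc_eq, Matrix.IsHermitian.cfc, Unitary.conjStarAlgAut_apply]; rfl
    open scoped MatrixOrder in
    rw [e1, ← cfcₙ_eq_cfc (hf0 := Real.sqrt_zero), ← CFC.sqrt_eq_real_sqrt _ hPSD.nonneg]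
    open scoped MatrixOrder in
    exact CFC.sqrt_unique (by rw [← hSsq, pow_two]) hS.nonneg
  rw [traceNorm, hsqrt, hSdef, myTrace_unitary_conj, Matrix.trace_diagonal]
  simp

lemma myHsNorm_hermitian {A : Matrix n n ℂ} (hA : A.IsHermitian) :
    hsNorm A = Real.sqrt (∑ i, hA.eigenvalues i ^ 2) := by
  rw [hsNorm]
  congr 1
  rw [myHerm_conj_mul hA, myTrace_unitary_conj, Matrix.trace_diagonal]
  simp [← Complex.ofReal_pow]

lemma mySum_sq_le {ι : Type*} {s : Finset ι} {f : ι → ℝ} (h0 : ∑ i ∈ s, f i = 0) :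
    ∑ i ∈ s, f i ^ 2 ≤ (∑ i ∈ s, |f i|) ^ 2 / 2 := by
  set P := ∑ i ∈ s, max (f i) 0 with hP
  set N := ∑ i ∈ s, max (-f i) 0 with hN
  have hPN : P - N = 0 := by
    rw [hP, hN, ← Finset.sum_sub_distrib,
      show (∑ i ∈ s, (max (f i) 0 - max (-f i) 0)) = ∑ i ∈ s, f i from
        Finset.sum_congr rfl fun i _ => max_zero_sub_max_neg_zero_eq_self (f i), h0]
  have habs : ∑ i ∈ s, |f i| = P + N := by
    rw [hP, hN, ← Finset.sum_add_distrib]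
    refine Finset.sum_congr rfl fun i _ => ?_
    rcases le_total 0 (f i) with h | h
    · rw [abs_of_nonneg h, max_eq_left h, max_eq_right (by linarith), add_zero]
    · rw [abs_of_nonpos h, max_eq_right h, max_eq_left (by linarith), zero_add]
  have hsq : ∑ i ∈ s, f i ^ 2 = ∑ i ∈ s, ((max (f i) 0) ^ 2 + (max (-f i) 0) ^ 2) := by
    refine Finset.sum_congr rfl fun i _ => ?_
    rcases le_total 0 (f i) with h | h
    · rw [max_eq_left h, max_eq_right (by linarith)]; ring
    · rw [max_eq_right h, max_eq_left (by linarith)]; ring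
  have h1 : ∑ i ∈ s, (max (f i) 0) ^ 2 ≤ P ^ 2 :=
    Finset.sum_sq_le_sq_sum_of_nonneg fun i _ => le_max_right _ _
  have h2 : ∑ i ∈ s, (max (-f i) 0) ^ 2 ≤ N ^ 2 :=
    Finset.sum_sq_le_sq_sum_of_nonneg fun i _ => le_max_right _ _
  rw [hsq, Finset.sum_add_distrib, habs]
  nlinarith [h1, h2, hPN]

end Aux

section Ptransp

lemma myPtransp_trace {d k : ℕ} (X : Matrix (Fin d × Fin k) (Fin d × Fin k) ℂ) :
    ((ptransp X)ᴴ * ptransp X).trace = (Xᴴ * X).trace := by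
  have key : ∀ Y : Matrix (Fin d × Fin k) (Fin d × Fin k) ℂ,
      (Yᴴ * Y).trace = ∑ x : (Fin d × Fin k) × (Fin d × Fin k),
        star (Y x.1 x.2) * Y x.1 x.2 := by
    intro Y
    rw [Matrix.trace]
    simp only [Matrix.diag, Matrix.mul_apply, Matrix.conjTranspose_apply]
    conv_rhs => rw [Fintype.sum_prod_type]
    exact Finset.sum_comm
  rw [key, key]
  exact Fintype.sum_bijective
    (fun x : (Fin d × Fin k) × (Fin d × Fin k) => ((x.2.1, x.1.2), (x.1.1, x.2.2)))
    (Function.Involutive.bijective fun x => rfl) _ _ (fun x => rfl)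

lemma myHsNorm_ptransp {d k : ℕ} (X : Matrix (Fin d × Fin k) (Fin d × Fin k) ℂ) :
    hsNorm (ptransp X) = hsNorm X := by
  rw [hsNorm, hsNorm, myPtransp_trace]

end Ptransp

section TensorExt

variable {d m : ℕ} (E : Fin m → Matrix (Fin d) (Fin d) ℂ)
  (T : Matrix (Fin d) (Fin d) ℂ → Matrix (Fin d) (Fin d) ℂ)

lemma myTensorExt_trace (hE : ∑ i, (E i)ᴴ * E i = 1)
    (hT : ∀ X, T X = ∑ i, E i * X * (E i)ᴴ)
    (ρ : Matrix (Fin d × Fin d) (Fin d × Fin d) ℂ) :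
    (tensorExt T ρ).trace = ρ.trace := by
  have hTtr : ∀ X : Matrix (Fin d) (Fin d) ℂ, (T X).trace = X.trace := by
    intro X
    rw [hT, Matrix.trace_sum]
    calc ∑ i, (E i * X * (E i)ᴴ).trace
        = ∑ i, ((E i)ᴴ * E i * X).trace := by
          refine Finset.sum_congr rfl fun i _ => ?_
          rw [Matrix.trace_mul_cycle, Matrix.mul_assoc]
      _ = ((∑ i, (E i)ᴴ * E i) * X).trace := by
          rw [← Matrix.trace_sum, Finset.sum_mul]
      _ = X.trace := by rw [hE, one_mul]
  have h1 : (tensorExt T ρ).trace = ∑ j, (T (fun a b => ρ (a, j) (b, j))).trace := by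
    rw [show (tensorExt T ρ).trace
        = ∑ p : Fin d × Fin d, T (fun a b => ρ (a, p.2) (b, p.2)) p.1 p.1 from rfl,
      Fintype.sum_prod_type, Finset.sum_comm]
    rfl
  rw [h1, show (∑ j, (T (fun a b => ρ (a, j) (b, j))).trace)
      = ∑ j, ∑ a, ρ (a, j) (a, j) from Finset.sum_congr rfl fun j _ => by exact (hTtr (fun a b => ρ (a, j) (b, j))).trans rfl,
    show ρ.trace = ∑ a, ∑ j, ρ (a, j) (a, j) from by
      rw [Matrix.trace, Fintype.sum_prod_type]; rfl]
  exact Finset.sum_comm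

lemma myTensorExt_herm (hT : ∀ X, T X = ∑ i, E i * X * (E i)ᴴ)
    (ρ : Matrix (Fin d × Fin d) (Fin d × Fin d) ℂ) (hρ : ρ.IsHermitian) :
    (tensorExt T ρ).IsHermitian := by
  have key : ∀ X : Matrix (Fin d) (Fin d) ℂ, (T Xᴴ)ᴴ = T X := by
    intro X
    rw [hT, hT, Matrix.conjTranspose_sum]
    refine Finset.sum_congr rfl fun i _ => ?_
    simp [Matrix.conjTranspose_mul, Matrix.mul_assoc]
  show (tensorExt T ρ)ᴴ = tensorExt T ρ
  ext p q
  rw [Matrix.conjTranspose_apply]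
  show star (T (fun a b => ρ (a, q.2) (b, p.2)) q.1 p.1)
      = T (fun a b => ρ (a, p.2) (b, q.2)) p.1 q.1
  have hZ : (fun a b => ρ (a, q.2) (b, p.2)) = (fun a b => ρ (a, p.2) (b, q.2))ᴴ := by
    funext a b
    show ρ (a, q.2) (b, p.2) = star (ρ (b, p.2) (a, q.2))
    conv_lhs => rw [← hρ.eq]
    rw [Matrix.conjTranspose_apply]
  rw [hZ, ← Matrix.conjTranspose_apply]
  exact congrFun (congrFun (key _) p.1) q.1

end TensorExt

theorem ptransp_trace_norm_bound {d m : ℕ}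
    (E : Fin m → Matrix (Fin d) (Fin d) ℂ) (hE : ∑ i, (E i)ᴴ * E i = 1)
    (T : Matrix (Fin d) (Fin d) ℂ → Matrix (Fin d) (Fin d) ℂ)
    (hT : ∀ X, T X = ∑ i, E i * X * (E i)ᴴ)
    (ρ : Matrix (Fin d × Fin d) (Fin d × Fin d) ℂ)
    (hρ : ρ.PosSemidef) (hρ1 : ρ.trace = 1) :
    traceNorm (ptransp (ρ - tensorExt T ρ)) ≤
      (d / Real.sqrt 2) * traceNorm (ρ - tensorExt T ρ) := by
  set Δ := ρ - tensorExt T ρ with hΔdef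
  have hΔ : Δ.IsHermitian := hρ.1.sub (myTensorExt_herm E T hT ρ hρ.1)
  have hΔtr : Δ.trace = 0 := by
    rw [hΔdef, Matrix.trace_sub, myTensorExt_trace E T hE hT ρ, sub_self]
  have hsum : ∑ i, hΔ.eigenvalues i = 0 := by
    have h := myTrace_eq_sum_eigenvalues hΔ
    rw [hΔtr] at h
    have h' : ((∑ i, hΔ.eigenvalues i : ℝ) : ℂ) = 0 := by
      push_cast
      rw [← h]
    exact_mod_cast h'
  have hhs : hsNorm Δ ≤ traceNorm Δ / Real.sqrt 2 := by
    rw [myHsNorm_hermitian hΔ, myTraceNorm_hermitian hΔ]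
    have h2 := mySum_sq_le (s := Finset.univ) hsum
    calc Real.sqrt (∑ i, hΔ.eigenvalues i ^ 2)
        ≤ Real.sqrt ((∑ i, |hΔ.eigenvalues i|) ^ 2 / 2) := Real.sqrt_le_sqrt h2
      _ = (∑ i, |hΔ.eigenvalues i|) / Real.sqrt 2 := by
          rw [Real.sqrt_div (sq_nonneg _) 2,
            Real.sqrt_sq (Finset.sum_nonneg fun i _ => abs_nonneg _)]
  have hcard : Real.sqrt (Fintype.card (Fin d × Fin d)) = d := by
    rw [show ((Fintype.card (Fin d × Fin d) : ℝ)) = (d : ℝ) ^ 2 by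
      simp [Fintype.card_prod]; ring]
    exact Real.sqrt_sq (by positivity)
  calc traceNorm (ptransp Δ)
      ≤ Real.sqrt (Fintype.card (Fin d × Fin d)) * hsNorm (ptransp Δ) :=
        myTraceNorm_le_card _
    _ = d * hsNorm Δ := by rw [hcard, myHsNorm_ptransp]
    _ ≤ d * (traceNorm Δ / Real.sqrt 2) :=
        mul_le_mul_of_nonneg_left hhs (by positivity)
    _ = (d / Real.sqrt 2) * traceNorm Δ := by ring
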